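/- Let A ∈ Sp(2n) be truly hyperbolic (no eigenvalue on the unit circle). Then for every symmetric matrix Q there exists a symmetric matrix Y such that Q + (A⁻ᵀYA⁻¹ − Y) is positive definite. Equivalently, the projection to the conjugacy-class space maps the positive cone P_A = {JPA : P symmetric positive definite} ⊂ T_A Sp(2n) onto the full tangent space of Conj(Sp(2n)) at [A]. -/

import Mathlib

open Matrix Set

noncomputable section

def J2 : Matrix (Fin 2) (Fin 2) ℝ := !![0, -1; 1, 0]

/-- The standard symplectic matrix `J = diag(J₂, …, J₂)`. -/
def Jn (n : ℕ) : Matrix (Fin 2 × Fin n) (Fin 2 × Fin n) ℝ :=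
  Matrix.blockDiagonal fun _ => J2

/-- `A` is truly hyperbolic: no eigenvalue on the unit circle. -/
def TrulyHyperbolic {n : ℕ} (A : Matrix (Fin 2 × Fin n) (Fin 2 × Fin n) ℝ) : Prop :=
  ∀ z : ℂ, ‖z‖ = 1 →
    ∀ v : Fin 2 × Fin n → ℂ, (A.map (fun x : ℝ => (x : ℂ))) *ᵥ v = z • v → v = 0

namespace THaux

open scoped ComplexOrder

set_option linter.unusedSectionVars false
set_option linter.unusedVariables false

variable {ι : Type*} [Fintype ι] [DecidableEq ι]

def sCone (ι : Type*) [Fintype ι] : Set (Matrix ι ι ℝ) :=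
  {P | ∀ v : ι → ℝ, v ≠ 0 → 0 < v ⬝ᵥ (P *ᵥ v)}

lemma dot_self_nonneg (v : ι → ℝ) : 0 ≤ v ⬝ᵥ v :=
  Finset.sum_nonneg fun i _ => mul_self_nonneg _

lemma dot_self_pos {v : ι → ℝ} (hv : v ≠ 0) : 0 < v ⬝ᵥ v :=
  lt_of_le_of_ne (dot_self_nonneg v) fun h => hv (dotProduct_self_eq_zero.mp h.symm)

lemma quad_bound (Q : Matrix ι ι ℝ) (v : ι → ℝ) :
    |v ⬝ᵥ (Q *ᵥ v)| ≤ (∑ i, ∑ j, |Q i j|) * (v ⬝ᵥ v) := by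
  have habs : ∀ i j : ι, |v i| * |v j| ≤ v ⬝ᵥ v := by
    intro i j
    have h1 : v i * v i ≤ v ⬝ᵥ v := Finset.single_le_sum
      (f := fun k => v k * v k) (fun k _ => mul_self_nonneg _) (Finset.mem_univ i)
    have h2 : v j * v j ≤ v ⬝ᵥ v := Finset.single_le_sum
      (f := fun k => v k * v k) (fun k _ => mul_self_nonneg _) (Finset.mem_univ j)
    nlinarith [sq_abs (v i), sq_abs (v j), sq_nonneg (|v i| - |v j|), abs_nonneg (v i),
      abs_nonneg (v j)]
  have hexp : v ⬝ᵥ (Q *ᵥ v) = ∑ i, ∑ j, v i * Q i j * v j := by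
    simp [dotProduct, mulVec, Finset.mul_sum, mul_assoc]
  rw [hexp, Finset.sum_mul]
  calc |∑ i, ∑ j, v i * Q i j * v j| ≤ ∑ i, |∑ j, v i * Q i j * v j| :=
        Finset.abs_sum_le_sum_abs _ _
    _ ≤ ∑ i, ∑ j, |v i * Q i j * v j| :=
        Finset.sum_le_sum fun i _ => Finset.abs_sum_le_sum_abs _ _
    _ ≤ ∑ i, (∑ j, |Q i j|) * (v ⬝ᵥ v) := by
        refine Finset.sum_le_sum fun i _ => ?_
        rw [Finset.sum_mul]
        refine Finset.sum_le_sum fun j _ => ?_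
        rw [abs_mul, abs_mul]
        calc |v i| * |Q i j| * |v j| = |Q i j| * (|v i| * |v j|) := by ring
          _ ≤ |Q i j| * (v ⬝ᵥ v) := by
              exact mul_le_mul_of_nonneg_left (habs i j) (abs_nonneg _)

lemma sCone_min {W : Matrix ι ι ℝ} (hW : W ∈ sCone ι) :
    ∃ c > (0:ℝ), ∀ v : ι → ℝ, c * (v ⬝ᵥ v) ≤ v ⬝ᵥ (W *ᵥ v) := by
  cases isEmpty_or_nonempty ι with
  | inl h =>
    refine ⟨1, one_pos, fun v => ?_⟩
    have hv : v = 0 := Subsingleton.elim _ _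
    simp [hv]
  | inr h =>
    set K : Set (ι → ℝ) := {v | v ⬝ᵥ v = 1} with hK
    have hcont : Continuous fun v : ι → ℝ => v ⬝ᵥ (W *ᵥ v) :=
      continuous_id.dotProduct (continuous_const.matrix_mulVec continuous_id)
    have hcont2 : Continuous fun v : ι → ℝ => v ⬝ᵥ v :=
      continuous_id.dotProduct continuous_id
    have hKc : IsClosed K := isClosed_eq hcont2 continuous_const
    have hKb : K ⊆ Metric.closedBall 0 1 := by
      intro v hv
      rw [Metric.mem_closedBall, dist_pi_le_iff zero_le_one]
      intro i
      simp only [Real.dist_eq, Pi.zero_apply, sub_zero]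
      have h1 : v i * v i ≤ v ⬝ᵥ v := Finset.single_le_sum
        (f := fun k => v k * v k) (fun k _ => mul_self_nonneg _) (Finset.mem_univ i)
      rw [hv] at h1
      nlinarith [abs_nonneg (v i), sq_abs (v i)]
    have hKcomp : IsCompact K :=
      (isCompact_closedBall (0 : ι → ℝ) 1).of_isClosed_subset hKc hKb
    have hKne : K.Nonempty := by
      obtain ⟨i⟩ := h
      refine ⟨Pi.single i 1, ?_⟩
      simp [hK, dotProduct, Pi.single_apply]
    obtain ⟨w, hwK, hmin⟩ := hKcomp.exists_isMinOn hKne hcont.continuousOn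
    have hwne : w ≠ 0 := by
      intro h0
      rw [h0] at hwK
      simp [hK] at hwK
    refine ⟨w ⬝ᵥ (W *ᵥ w), hW w hwne, fun v => ?_⟩
    rcases eq_or_ne v 0 with rfl | hv
    · simp
    · set t : ℝ := Real.sqrt (v ⬝ᵥ v) with ht
      have hvv : 0 < v ⬝ᵥ v := dot_self_pos hv
      have htpos : 0 < t := Real.sqrt_pos.mpr hvv
      have ht2 : t * t = v ⬝ᵥ v := Real.mul_self_sqrt hvv.le
      set u : ι → ℝ := t⁻¹ • v with hu
      have huK : u ∈ K := by
        simp only [hK, mem_setOf_eq, hu, smul_dotProduct, dotProduct_smul, smul_eq_mul]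
        field_simp
        linarith [ht2]
      have hmu : w ⬝ᵥ (W *ᵥ w) ≤ u ⬝ᵥ (W *ᵥ u) := hmin huK
      have hexp : u ⬝ᵥ (W *ᵥ u) = t⁻¹ * t⁻¹ * (v ⬝ᵥ (W *ᵥ v)) := by
        simp only [hu, Matrix.mulVec_smul, smul_dotProduct, dotProduct_smul, smul_eq_mul]
        ring
      rw [hexp] at hmu
      have : w ⬝ᵥ (W *ᵥ w) ≤ t⁻¹ * t⁻¹ * (v ⬝ᵥ (W *ᵥ v)) := hmu
      have hne : t ≠ 0 := htpos.ne'
      calc (w ⬝ᵥ (W *ᵥ w)) * (v ⬝ᵥ v) = (w ⬝ᵥ (W *ᵥ w)) * (t * t) := by rw [ht2]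
        _ ≤ (t⁻¹ * t⁻¹ * (v ⬝ᵥ (W *ᵥ v))) * (t * t) := by nlinarith [mul_pos htpos htpos]
        _ = v ⬝ᵥ (W *ᵥ v) := by field_simp

lemma sCone_isOpen : IsOpen (sCone ι) := by
  rw [isOpen_iff_forall_mem_open]
  intro P hP
  obtain ⟨c, hc, hcmin⟩ := sCone_min hP
  set N : ℝ := (Fintype.card ι : ℝ) ^ 2 + 1 with hN
  have hNpos : 0 < N := by positivity
  set ε : ℝ := c / N with hε
  have hεpos : 0 < ε := div_pos hc hNpos
  refine ⟨{P' | ∀ i j, |P' i j - P i j| < ε}, ?_, ?_, ?_⟩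
  · intro P' hP' v hv
    have hD : |v ⬝ᵥ ((P' - P) *ᵥ v)| ≤ (∑ i, ∑ j, |(P' - P) i j|) * (v ⬝ᵥ v) :=
      quad_bound _ v
    have hsum : (∑ i, ∑ j, |(P' - P) i j|) ≤ (Fintype.card ι : ℝ)^2 * ε := by
      calc (∑ i, ∑ j, |(P' - P) i j|) ≤ ∑ i : ι, ∑ j : ι, ε := by
            refine Finset.sum_le_sum fun i _ => Finset.sum_le_sum fun j _ => ?_
            exact (hP' i j).le
        _ = (Fintype.card ι : ℝ)^2 * ε := by
            simp only [Finset.sum_const, Finset.card_univ, smul_eq_mul]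
            ring
    have hvv : 0 < v ⬝ᵥ v := dot_self_pos hv
    have hkey : v ⬝ᵥ ((P' - P) *ᵥ v) = v ⬝ᵥ (P' *ᵥ v) - v ⬝ᵥ (P *ᵥ v) := by
      rw [Matrix.sub_mulVec, dotProduct_sub]
    have h1 : c * (v ⬝ᵥ v) ≤ v ⬝ᵥ (P *ᵥ v) := hcmin v
    have h2 : -(((Fintype.card ι : ℝ)^2 * ε) * (v ⬝ᵥ v)) ≤ v ⬝ᵥ ((P' - P) *ᵥ v) := by
      have := (abs_le.mp (le_trans hD (mul_le_mul_of_nonneg_right hsum (dot_self_nonneg v)))).1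
      linarith [this]
    have hcard : (Fintype.card ι : ℝ)^2 * ε < c := by
      rw [hε]
      rw [div_eq_inv_mul]
      have : (Fintype.card ι : ℝ)^2 < N := by rw [hN]; linarith
      calc (Fintype.card ι : ℝ)^2 * (N⁻¹ * c) = ((Fintype.card ι : ℝ)^2 / N) * c := by ring
        _ < 1 * c := by
            apply mul_lt_mul_of_pos_right _ hc
            rw [div_lt_one hNpos]; exact this
        _ = c := one_mul c
    nlinarith
  · have : {P' : Matrix ι ι ℝ | ∀ i j, |P' i j - P i j| < ε} =
        ⋂ i, ⋂ j, {P' : Matrix ι ι ℝ | |P' i j - P i j| < ε} := by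
      ext P'; simp [Set.mem_iInter]
    rw [this]
    refine isOpen_iInter_of_finite fun i => isOpen_iInter_of_finite fun j => ?_
    have hcont : Continuous fun P' : Matrix ι ι ℝ => |P' i j - P i j| := by
      have h1 : Continuous fun P' : Matrix ι ι ℝ => P' i j :=
        (continuous_apply j).comp (continuous_apply i)
      exact (h1.sub continuous_const).abs
    exact isOpen_lt hcont continuous_const
  · intro i j
    simpa using hεpos
lemma sCone_convex : Convex ℝ (sCone ι) := by
  intro P hP P' hP' a b ha hb hab v hv
  have h1 := hP v hv
  have h2 := hP' v hv
  have : v ⬝ᵥ ((a • P + b • P') *ᵥ v) = a * (v ⬝ᵥ P *ᵥ v) + b * (v ⬝ᵥ P' *ᵥ v) := by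
    simp [Matrix.add_mulVec, Matrix.smul_mulVec, dotProduct_add, dotProduct_smul,
      smul_eq_mul]
  rw [this]
  rcases eq_or_lt_of_le ha with rfl | ha'
  · simpa using mul_pos (by linarith : (0:ℝ) < b) h2
  · have : 0 ≤ b * (v ⬝ᵥ P' *ᵥ v) := mul_nonneg hb h2.le
    nlinarith

lemma sCone_one : (1 : Matrix ι ι ℝ) ∈ sCone ι := by
  intro v hv
  simpa using dot_self_pos hv

/-- From failure of the cone to meet the range of the Lyapunov-type operator,
separation produces an invariant positive semidefinite matrix. -/
lemma exists_invariant_psd (A : Matrix ι ι ℝ) (hdet : IsUnit A.det)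
    (h : ∀ Y : Matrix ι ι ℝ, (A⁻¹)ᵀ * Y * A⁻¹ - Y ∉ sCone ι) :
    ∃ S : Matrix ι ι ℝ, S.PosSemidef ∧ S ≠ 0 ∧ A * S * Aᵀ = S := by
  classical
  -- the Lyapunov operator as a linear map
  set L : Matrix ι ι ℝ →ₗ[ℝ] Matrix ι ι ℝ :=
    { toFun := fun Y => (A⁻¹)ᵀ * Y * A⁻¹ - Y
      map_add' := by intro Y Z; noncomm_ring
      map_smul' := by
        intro r Y
        simp [Matrix.mul_smul, Matrix.smul_mul, smul_sub] } with hL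
  have hdisj : Disjoint (sCone ι) (LinearMap.range L : Set (Matrix ι ι ℝ)) := by
    rw [Set.disjoint_left]
    rintro M hM ⟨Y, rfl⟩
    exact h Y hM
  obtain ⟨f, u, hfs, hft⟩ :=
    geometric_hahn_banach_open sCone_convex sCone_isOpen
      (LinearMap.range L).convex hdisj
  -- f vanishes on the range of L
  have hker : ∀ Y : Matrix ι ι ℝ, f (L Y) = 0 := by
    intro Y
    by_contra hfM
    have h1 : ∀ r : ℝ, u ≤ r * f (L Y) := by
      intro r
      have : (r • L Y) ∈ (LinearMap.range L : Set (Matrix ι ι ℝ)) :=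
        Submodule.smul_mem _ r (LinearMap.mem_range_self L Y)
      simpa [_root_.map_smul, smul_eq_mul] using hft _ this
    have h2 := h1 ((u - 1) / f (L Y))
    rw [div_mul_cancel₀ _ hfM] at h2
    linarith
  have hu0 : u ≤ 0 := by
    have : (0 : Matrix ι ι ℝ) ∈ (LinearMap.range L : Set (Matrix ι ι ℝ)) :=
      Submodule.zero_mem _
    simpa using hft _ this
  have hf1 : f 1 < 0 := lt_of_lt_of_le (hfs _ sCone_one) hu0
  -- the representing matrix
  set X : Matrix ι ι ℝ := Matrix.of fun i j => f (Matrix.single i j 1) with hX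
  have hXapp : ∀ i j, X i j = f (Matrix.single i j 1) := fun i j => rfl
  have hrep : ∀ P : Matrix ι ι ℝ, f P = ∑ i, ∑ j, P i j * X i j := by
    intro P
    conv_lhs => rw [matrix_eq_sum_single P]
    rw [map_sum]
    refine Finset.sum_congr rfl fun i _ => ?_
    rw [map_sum]
    refine Finset.sum_congr rfl fun j _ => ?_
    have : Matrix.single i j (P i j) = P i j • Matrix.single i j 1 := by
      rw [smul_single, smul_eq_mul, mul_one]
    rw [this, f.map_smul, smul_eq_mul, hXapp]
  -- auxiliary: elements 1 + perturbations with vanishing quadratic form stay in the cone,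
  -- forcing `f` to vanish on matrices with zero quadratic form
  have hzero : ∀ K : Matrix ι ι ℝ, (∀ w : ι → ℝ, w ⬝ᵥ (K *ᵥ w) = 0) → f K = 0 := by
    intro K hK
    by_contra hfK
    have hmem : ∀ t : ℝ, (1 : Matrix ι ι ℝ) + t • K ∈ sCone ι := by
      intro t w hw
      have : w ⬝ᵥ (((1 : Matrix ι ι ℝ) + t • K) *ᵥ w)
          = w ⬝ᵥ w + t * (w ⬝ᵥ (K *ᵥ w)) := by
        simp [Matrix.add_mulVec, dotProduct_add, Matrix.smul_mulVec,
          dotProduct_smul, smul_eq_mul]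
      rw [this, hK w, mul_zero, add_zero]
      exact dot_self_pos hw
    have hlt : ∀ t : ℝ, f 1 + t * f K < u := by
      intro t
      have := hfs _ (hmem t)
      simpa [map_add, _root_.map_smul, smul_eq_mul] using this
    have h2 := hlt ((u - f 1) / f K)
    rw [div_mul_cancel₀ _ hfK] at h2
    linarith
  -- X is symmetric
  have hsym : Xᵀ = X := by
    ext i j
    rw [Matrix.transpose_apply]
    have hanti : ∀ w : ι → ℝ,
        w ⬝ᵥ ((Matrix.single j i 1 - Matrix.single i j 1) *ᵥ w) = 0 := by
      intro w
      have hstd : ∀ (a b : ι), w ⬝ᵥ (Matrix.single a b 1 *ᵥ w) = w a * w b := by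
        intro a b
        simp [Matrix.single, mulVec, dotProduct, Finset.mul_sum, ite_and]
      rw [Matrix.sub_mulVec, dotProduct_sub, hstd, hstd]
      ring
    have := hzero _ hanti
    rw [map_sub] at this
    rw [hXapp, hXapp]
    linarith
  -- the quadratic form of X is nonpositive
  have hXneg : ∀ v : ι → ℝ, v ⬝ᵥ (X *ᵥ v) ≤ 0 := by
    intro v
    have hvv : ∀ ε : ℝ, 0 < ε → f (vecMulVec v v) + ε * f 1 < u := by
      intro ε hε
      have hmem : vecMulVec v v + ε • (1 : Matrix ι ι ℝ) ∈ sCone ι := by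
        intro w hw
        have hvm : vecMulVec v v *ᵥ w = (v ⬝ᵥ w) • v := by
          ext i
          simp [vecMulVec_apply, mulVec, dotProduct, Finset.mul_sum, mul_comm,
            mul_left_comm, Finset.smul_sum, smul_eq_mul]
        have : w ⬝ᵥ ((vecMulVec v v + ε • (1 : Matrix ι ι ℝ)) *ᵥ w)
            = (v ⬝ᵥ w) * (w ⬝ᵥ v) + ε * (w ⬝ᵥ w) := by
          simp [Matrix.add_mulVec, dotProduct_add, hvm, Matrix.smul_mulVec,
            dotProduct_smul, smul_eq_mul]
        rw [this, dotProduct_comm w v]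
        have h1 : 0 ≤ (v ⬝ᵥ w) * (v ⬝ᵥ w) := mul_self_nonneg _
        have h2 : 0 < ε * (w ⬝ᵥ w) := mul_pos hε (dot_self_pos hw)
        linarith
      have := hfs _ hmem
      simpa [map_add, _root_.map_smul, smul_eq_mul] using this
    have hfv : f (vecMulVec v v) ≤ 0 := by
      by_contra hpos
      push_neg at hpos
      set c : ℝ := -f 1 with hc
      have hcpos : 0 < c := by rw [hc]; linarith
      set ε : ℝ := f (vecMulVec v v) / (2 * c) with hε
      have hεpos : 0 < ε := div_pos hpos (by linarith)
      have hkey := hvv ε hεpos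
      have hεf1 : ε * f 1 = -(f (vecMulVec v v)) / 2 := by
        rw [hε]
        have : f 1 = -c := by rw [hc]; ring
        rw [this]
        field_simp
      rw [hεf1] at hkey
      linarith
    have heq : f (vecMulVec v v) = v ⬝ᵥ (X *ᵥ v) := by
      rw [hrep]
      simp only [dotProduct, mulVec, vecMulVec_apply, Finset.mul_sum]
      exact Finset.sum_congr rfl fun i _ => Finset.sum_congr rfl fun j _ => by ring
    rw [← heq]
    exact hfv
  -- the candidate invariant psd matrix
  refine ⟨-X, .of_dotProduct_mulVec_nonneg ?_ ?_, ?_, ?_⟩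
  · -- hermitian
    show (-X)ᴴ = -X
    rw [conjTranspose_neg]
    have : Xᴴ = Xᵀ := by
      ext i j
      simp [conjTranspose_apply, star_trivial]
    rw [this, hsym]
  · -- psd quadratic form
    intro x
    have : star x = x := by
      funext i; exact star_trivial _
    rw [this, Matrix.neg_mulVec, dotProduct_neg]
    have := hXneg x
    simp only [ge_iff_le]
    linarith
  · -- nonzero
    intro hS0
    have hX0 : X = 0 := by
      have := congrArg Neg.neg hS0
      simpa using this
    have : f 1 = 0 := by
      rw [hrep]
      simp [hX0]
    linarith
  · -- invariance
    have htr : ∀ P : Matrix ι ι ℝ, f P = Matrix.trace (P * Xᵀ) := by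
      intro P
      rw [hrep, Matrix.trace]
      simp only [Matrix.diag, Matrix.mul_apply, Matrix.transpose_apply]
    -- the matrix N := A⁻¹ * Xᵀ * (A⁻¹)ᵀ - Xᵀ annihilates all traces against Y
    set N : Matrix ι ι ℝ := A⁻¹ * Xᵀ * (A⁻¹)ᵀ - Xᵀ with hN
    have htrN : ∀ Y : Matrix ι ι ℝ, Matrix.trace (Y * N) = 0 := by
      intro Y
      have h0 := hker Y
      rw [htr] at h0
      have hLY : L Y = (A⁻¹)ᵀ * Y * A⁻¹ - Y := rfl
      rw [hLY] at h0
      have hexp : ((A⁻¹)ᵀ * Y * A⁻¹ - Y) * Xᵀ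
          = (A⁻¹)ᵀ * Y * (A⁻¹ * Xᵀ) - Y * Xᵀ := by
        rw [Matrix.sub_mul]
        rw [Matrix.mul_assoc ((A⁻¹)ᵀ * Y) (A⁻¹) (Xᵀ)]
      rw [hexp, Matrix.trace_sub] at h0
      have hcyc : Matrix.trace ((A⁻¹)ᵀ * Y * (A⁻¹ * Xᵀ))
          = Matrix.trace (Y * (A⁻¹ * Xᵀ * (A⁻¹)ᵀ)) := by
        calc Matrix.trace ((A⁻¹)ᵀ * Y * (A⁻¹ * Xᵀ))
            = Matrix.trace ((A⁻¹ * Xᵀ) * ((A⁻¹)ᵀ * Y)) := Matrix.trace_mul_comm _ _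
          _ = Matrix.trace ((A⁻¹ * Xᵀ * (A⁻¹)ᵀ) * Y) := by
              rw [Matrix.mul_assoc (A⁻¹ * Xᵀ) ((A⁻¹)ᵀ) Y]
          _ = Matrix.trace (Y * (A⁻¹ * Xᵀ * (A⁻¹)ᵀ)) := Matrix.trace_mul_comm _ _
      rw [hcyc] at h0
      rw [hN, Matrix.mul_sub, Matrix.trace_sub]
      linarith
    have hNzero : N = 0 := by
      have h0 := htrN Nᵀ
      have hexp : Matrix.trace (Nᵀ * N) = ∑ j, ∑ i, N i j * N i j := by
        rw [Matrix.trace]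
        simp only [Matrix.diag, Matrix.mul_apply, Matrix.transpose_apply]
      rw [hexp] at h0
      have hterm : ∀ j ∈ Finset.univ (α := ι), ∀ i ∈ Finset.univ (α := ι),
          N i j * N i j = 0 := by
        have h1 := (Finset.sum_eq_zero_iff_of_nonneg
          (fun j _ => Finset.sum_nonneg fun i _ => mul_self_nonneg (N i j))).mp h0
        intro j hj i hi
        have h2 := (Finset.sum_eq_zero_iff_of_nonneg
          (fun i _ => mul_self_nonneg (N i j))).mp (h1 j hj)
        exact h2 i hi
      ext i j
      have := hterm j (Finset.mem_univ j) i (Finset.mem_univ i)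
      simpa using mul_self_eq_zero.mp this
    have hXinv : A⁻¹ * X * (A⁻¹)ᵀ = X := by
      have : A⁻¹ * Xᵀ * (A⁻¹)ᵀ - Xᵀ = 0 := hNzero
      rw [hsym] at this
      linear_combination (norm := noncomm_ring) this
    have hAinv : A * A⁻¹ = 1 := Matrix.mul_nonsing_inv A hdet
    have hAinvT : (A⁻¹)ᵀ * Aᵀ = 1 := by
      rw [← Matrix.transpose_mul, hAinv, Matrix.transpose_one]
    have hXfix : A * X * Aᵀ = X := by
      calc A * X * Aᵀ = A * (A⁻¹ * X * (A⁻¹)ᵀ) * Aᵀ := by rw [hXinv]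
        _ = (A * A⁻¹) * X * ((A⁻¹)ᵀ * Aᵀ) := by noncomm_ring
        _ = X := by rw [hAinv, hAinvT, Matrix.one_mul, Matrix.mul_one]
    calc A * (-X) * Aᵀ = -(A * X * Aᵀ) := by noncomm_ring
      _ = -X := by rw [hXfix]

/-- An invariant nonzero psd matrix forces an eigenvalue on the unit circle. -/
lemma exists_unit_eigenvalue (A : Matrix ι ι ℝ) (hdet : IsUnit A.det)
    {S : Matrix ι ι ℝ} (hS : S.PosSemidef) (hS0 : S ≠ 0) (hAS : A * S * Aᵀ = S) :
    ∃ (z : ℂ) (v : ι → ℂ), ‖z‖ = 1 ∧ v ≠ 0 ∧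
      (A.map (fun x : ℝ => (x : ℂ))) *ᵥ v = z • v := by
  classical
  set φ : ℝ →+* ℂ := Complex.ofRealHom with hφ
  set Ac : Matrix ι ι ℂ := A.map φ with hAc
  set Sc : Matrix ι ι ℂ := S.map φ with hSc
  -- basic facts
  have hmapT : ∀ M : Matrix ι ι ℝ, (Mᵀ).map (φ : ℝ → ℂ) = (M.map φ)ᵀ :=
    fun M => Matrix.transpose_map.symm ▸ rfl
  have hASc : Ac * Sc * Acᵀ = Sc := by
    have := congrArg (fun M : Matrix ι ι ℝ => M.map (φ : ℝ → ℂ)) hAS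
    simpa [Matrix.map_mul, Matrix.transpose_map] using this
  -- Sc is psd
  have hScPsd : Sc.PosSemidef := by
    obtain ⟨B, hB⟩ : ∃ B : Matrix ι ι ℝ, S = Bᴴ * B := by
      open scoped MatrixOrder in
      exact CStarAlgebra.nonneg_iff_eq_star_mul_self.mp hS.nonneg
    have hBc : Sc = (B.map φ)ᴴ * (B.map φ) := by
      rw [hSc, hB, Matrix.map_mul]
      congr 1
      rw [← Matrix.conjTranspose_map]
      intro a
      simp [hφ]
    rw [hBc]
    exact Matrix.posSemidef_conjTranspose_mul_self _
  -- invertibility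
  have hdetc : IsUnit Ac.det := by
    have : Ac.det = φ A.det := by
      rw [hAc, ← RingHom.mapMatrix_apply, ← RingHom.map_det]
    rw [this]
    exact RingHom.isUnit_map φ hdet
  have hdetcT : IsUnit (Acᵀ).det := by rwa [Matrix.det_transpose]
  have hAcinv : Ac * Ac⁻¹ = 1 := Matrix.mul_nonsing_inv Ac hdetc
  have hAcinv' : Ac⁻¹ * Ac = 1 := Matrix.nonsing_inv_mul Ac hdetc
  have hAcTinv : Acᵀ * (Acᵀ)⁻¹ = 1 := Matrix.mul_nonsing_inv _ hdetcT
  have hAcTinv' : (Acᵀ)⁻¹ * Acᵀ = 1 := Matrix.nonsing_inv_mul _ hdetcT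
  have hkey : Ac * Sc = Sc * (Acᵀ)⁻¹ := by
    calc Ac * Sc = Ac * Sc * (Acᵀ * (Acᵀ)⁻¹) := by rw [hAcTinv, Matrix.mul_one]
      _ = (Ac * Sc * Acᵀ) * (Acᵀ)⁻¹ := by noncomm_ring
      _ = Sc * (Acᵀ)⁻¹ := by rw [hASc]
  have hkey2 : Ac⁻¹ * Sc * ((Acᵀ)⁻¹) = Sc := by
    calc Ac⁻¹ * Sc * (Acᵀ)⁻¹ = Ac⁻¹ * (Ac * Sc * Acᵀ) * (Acᵀ)⁻¹ := by rw [hASc]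
      _ = (Ac⁻¹ * Ac) * Sc * (Acᵀ * (Acᵀ)⁻¹) := by noncomm_ring
      _ = Sc := by rw [hAcinv', hAcTinv, Matrix.one_mul, Matrix.mul_one]
  -- the invariant subspace
  set W : Submodule ℂ (ι → ℂ) := LinearMap.range Sc.mulVecLin with hW
  have hWinv : ∀ x ∈ W, Ac.mulVecLin x ∈ W := by
    rintro x ⟨y, rfl⟩
    refine ⟨(Acᵀ)⁻¹ *ᵥ y, ?_⟩
    simp only [Matrix.mulVecLin_apply]
    rw [Matrix.mulVec_mulVec, ← hkey, ← Matrix.mulVec_mulVec]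
  set e : Module.End ℂ W := (Ac.mulVecLin).restrict hWinv with he
  -- W is nontrivial
  have hScne : Sc ≠ 0 := by
    intro h0
    apply hS0
    ext i j
    have h1 : Sc i j = 0 := by rw [h0]; rfl
    rw [hSc, Matrix.map_apply] at h1
    simp only [Matrix.zero_apply]
    exact Complex.ofReal_eq_zero.mp (by simpa [hφ] using h1)
  obtain ⟨y0, hy0⟩ : ∃ y : ι → ℂ, Sc *ᵥ y ≠ 0 := by
    by_contra hy
    push_neg at hy
    apply hScne
    ext i j
    have := congrFun (hy (Pi.single j 1)) i
    simpa using this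
  haveI : Nontrivial W := by
    rw [Submodule.nontrivial_iff_ne_bot]
    intro hbot
    have hmem : Sc *ᵥ y0 ∈ W := ⟨y0, by simp [Matrix.mulVecLin_apply]⟩
    rw [hbot, Submodule.mem_bot] at hmem
    exact hy0 hmem
  -- eigenvalue of the restriction
  obtain ⟨z, hz⟩ := Module.End.exists_eigenvalue e
  obtain ⟨w, hw⟩ := hz.exists_hasEigenvector
  have hwvec : Ac *ᵥ (w : ι → ℂ) = z • (w : ι → ℂ) := by
    have h1 : e w = z • w := hw.apply_eq_smul
    have h2 : ((e w : W) : ι → ℂ) = Ac.mulVecLin w := rfl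
    rw [h1] at h2
    simpa [Matrix.mulVecLin_apply] using h2.symm
  have hwne : (w : ι → ℂ) ≠ 0 := fun hc => hw.right (Subtype.ext hc)
  -- |z| = 1
  obtain ⟨uu, huu⟩ : ∃ u : ι → ℂ, Sc *ᵥ u = (w : ι → ℂ) := w.2
  have huu' : Sc.mulVecLin uu = (w : ι → ℂ) := huu
  set u' : ι → ℂ := (Acᵀ)⁻¹ *ᵥ uu with hu'
  have hSu' : Sc *ᵥ u' = z • (Sc *ᵥ uu) := by
    rw [hu', Matrix.mulVec_mulVec, ← hkey, ← Matrix.mulVec_mulVec, huu, hwvec]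
  -- conjugate transpose facts
  have hconj2 : (Acᵀ)ᴴ = Ac := by
    ext i j
    simp [hAc, hφ, Matrix.conjTranspose_apply, Matrix.transpose_apply, Complex.conj_ofReal]
  have hScherm : Scᴴ = Sc := hScPsd.1
  have hinvH : ((Acᵀ)⁻¹)ᴴ = Ac⁻¹ := by
    rw [Matrix.conjTranspose_nonsing_inv, hconj2]
  -- the quadratic form computation
  have hstar : star u' = star uu ᵥ* Ac⁻¹ := by
    rw [hu', star_mulVec, hinvH]
  have h2 : star u' ⬝ᵥ (Sc *ᵥ u') = star uu ⬝ᵥ (Sc *ᵥ uu) := by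
    rw [hstar, ← dotProduct_mulVec, Matrix.mulVec_mulVec, hu', Matrix.mulVec_mulVec, hkey2]
  have h3 : star u' ⬝ᵥ (Sc *ᵥ u') = (z * star z) * (star uu ⬝ᵥ (Sc *ᵥ uu)) := by
    rw [hSu', dotProduct_smul, smul_eq_mul]
    have hmid : star u' ⬝ᵥ (Sc *ᵥ uu) = star z * (star uu ⬝ᵥ (Sc *ᵥ uu)) := by
      calc star u' ⬝ᵥ (Sc *ᵥ uu) = (star u' ᵥ* Sc) ⬝ᵥ uu := dotProduct_mulVec _ _ _
        _ = (star u' ᵥ* Scᴴ) ⬝ᵥ uu := by rw [hScherm]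
        _ = star (Sc *ᵥ u') ⬝ᵥ uu := by rw [← star_mulVec]
        _ = star (z • (Sc *ᵥ uu)) ⬝ᵥ uu := by rw [hSu']
        _ = star z * (star (Sc *ᵥ uu) ⬝ᵥ uu) := by
            rw [star_smul, smul_dotProduct, smul_eq_mul]
        _ = star z * ((star uu ᵥ* Scᴴ) ⬝ᵥ uu) := by rw [← star_mulVec]
        _ = star z * ((star uu ᵥ* Sc) ⬝ᵥ uu) := by rw [hScherm]
        _ = star z * (star uu ⬝ᵥ (Sc *ᵥ uu)) := by rw [← dotProduct_mulVec]
    rw [hmid]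
    ring
  have hqne : star uu ⬝ᵥ (Sc *ᵥ uu) ≠ 0 := by
    intro h0
    apply hwne
    rw [← huu]
    exact (hScPsd.dotProduct_mulVec_zero_iff uu).mp h0
  have hz1 : z * star z = 1 := by
    have := h2.symm.trans h3
    have hmul : (z * star z - 1) * (star uu ⬝ᵥ (Sc *ᵥ uu)) = 0 := by
      linear_combination -this
    rcases mul_eq_zero.mp hmul with h | h
    · linear_combination h
    · exact absurd h hqne
  have habs : ‖z‖ = 1 := by
    have hns : Complex.normSq z = 1 := by
      have := hz1
      rw [show star z = (starRingEnd ℂ) z from rfl, Complex.mul_conj] at this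
      exact_mod_cast this
    have h1 : ‖z‖ ^ 2 = 1 := by
      rw [← Complex.sq_norm] at hns
      exact hns
    nlinarith [norm_nonneg z]
  refine ⟨z, (w : ι → ℂ), habs, hwne, ?_⟩
  have hcoe : A.map (fun x : ℝ => (x : ℂ)) = Ac := rfl
  rw [hcoe]
  exact hwvec

end THaux

open THaux in
/-- If `A ∈ Sp(2n)` is truly hyperbolic, then for every symmetric `Q` there is a
symmetric `Y` with `Q + (A⁻ᵀYA⁻¹ − Y)` positive definite: the positive cone at `A`
surjects onto the tangent space of the conjugacy-class space. -/
theorem truly_hyperbolic_positive_cone_surjects {n : ℕ}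
    (A : Matrix (Fin 2 × Fin n) (Fin 2 × Fin n) ℝ)
    (hA : Aᵀ * Jn n * A = Jn n) (hth : TrulyHyperbolic A) :
    ∀ Q : Matrix (Fin 2 × Fin n) (Fin 2 × Fin n) ℝ, Qᵀ = Q →
      ∃ Y : Matrix (Fin 2 × Fin n) (Fin 2 × Fin n) ℝ, Yᵀ = Y ∧
        (Q + (((A⁻¹)ᵀ) * Y * A⁻¹ - Y)).PosDef := by
  intro Q hQ
  -- A is invertible
  have hJdet : (Jn n).det = 1 := by
    rw [Jn, Matrix.det_blockDiagonal]
    have h2 : J2.det = 1 := by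
      rw [J2, Matrix.det_fin_two_of]
      norm_num
    simp [h2]
  have hdet : IsUnit A.det := by
    have h1 : A.det * A.det = 1 := by
      have hc := congrArg Matrix.det hA
      rw [Matrix.det_mul, Matrix.det_mul, Matrix.det_transpose, hJdet] at hc
      linarith
    exact IsUnit.of_mul_eq_one _ h1
  -- find some Y₀ whose Lyapunov image is in the open positivity cone
  have hY0 : ∃ Y : Matrix (Fin 2 × Fin n) (Fin 2 × Fin n) ℝ,
      (A⁻¹)ᵀ * Y * A⁻¹ - Y ∈ sCone (Fin 2 × Fin n) := by
    by_contra hno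
    push_neg at hno
    obtain ⟨S, hSpsd, hSne, hSinv⟩ := exists_invariant_psd A hdet hno
    obtain ⟨z, v, hz, hv, heig⟩ := exists_unit_eigenvalue A hdet hSpsd hSne hSinv
    exact hv (hth z hz v heig)
  obtain ⟨Y₀, hY₀⟩ := hY0
  set W₀ : Matrix (Fin 2 × Fin n) (Fin 2 × Fin n) ℝ := (A⁻¹)ᵀ * Y₀ * A⁻¹ - Y₀ with hW₀
  set Y₁ : Matrix (Fin 2 × Fin n) (Fin 2 × Fin n) ℝ := (1/2 : ℝ) • (Y₀ + Y₀ᵀ) with hY₁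
  set W₁ : Matrix (Fin 2 × Fin n) (Fin 2 × Fin n) ℝ := (A⁻¹)ᵀ * Y₁ * A⁻¹ - Y₁ with hW₁
  have hY₁sym : Y₁ᵀ = Y₁ := by
    rw [hY₁, Matrix.transpose_smul, Matrix.transpose_add, Matrix.transpose_transpose,
      add_comm]
  have hW₀T : W₀ᵀ = (A⁻¹)ᵀ * Y₀ᵀ * A⁻¹ - Y₀ᵀ := by
    rw [hW₀, Matrix.transpose_sub, Matrix.transpose_mul, Matrix.transpose_mul,
      Matrix.transpose_transpose, Matrix.mul_assoc]
  have hW₁eq : W₁ = (1/2 : ℝ) • (W₀ + W₀ᵀ) := by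
    rw [hW₁, hW₀T, hY₁, hW₀]
    simp only [Matrix.mul_smul, Matrix.smul_mul, Matrix.mul_add, Matrix.add_mul,
      smul_add, smul_sub]
    module
  have hW₁sym : W₁ᵀ = W₁ := by
    rw [hW₁, Matrix.transpose_sub, Matrix.transpose_mul, Matrix.transpose_mul,
      Matrix.transpose_transpose, Matrix.mul_assoc, hY₁sym]
  have hdotT : ∀ (M : Matrix (Fin 2 × Fin n) (Fin 2 × Fin n) ℝ) (v : Fin 2 × Fin n → ℝ),
      v ⬝ᵥ (Mᵀ *ᵥ v) = v ⬝ᵥ (M *ᵥ v) := by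
    intro M v
    rw [dotProduct_mulVec, Matrix.vecMul_transpose, dotProduct_comm]
  have hW₁cone : W₁ ∈ sCone (Fin 2 × Fin n) := by
    intro v hv
    rw [hW₁eq]
    have hexp : v ⬝ᵥ (((1/2 : ℝ) • (W₀ + W₀ᵀ)) *ᵥ v)
        = (1/2 : ℝ) * (v ⬝ᵥ (W₀ *ᵥ v) + v ⬝ᵥ (W₀ᵀ *ᵥ v)) := by
      simp [Matrix.smul_mulVec, Matrix.add_mulVec, dotProduct_smul, dotProduct_add,
        smul_eq_mul, mul_add]
    rw [hexp, hdotT]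
    have h0 := hY₀ v hv
    linarith
  obtain ⟨c, hc, hmin⟩ := sCone_min hW₁cone
  set C : ℝ := ∑ i, ∑ j, |Q i j| with hC
  have hC0 : 0 ≤ C :=
    Finset.sum_nonneg fun i _ => Finset.sum_nonneg fun j _ => abs_nonneg _
  set t : ℝ := (C + 1) / c with htdef
  have ht : 0 < t := div_pos (by linarith) hc
  refine ⟨t • Y₁, by rw [Matrix.transpose_smul, hY₁sym], ?_⟩
  have hLsmul : (A⁻¹)ᵀ * (t • Y₁) * A⁻¹ - t • Y₁ = t • W₁ := by
    rw [hW₁, Matrix.mul_smul, Matrix.smul_mul, smul_sub]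
  rw [hLsmul]
  refine Matrix.PosDef.of_dotProduct_mulVec_pos ?_ ?_
  · -- Hermitian
    show (Q + t • W₁)ᴴ = Q + t • W₁
    have hT : (Q + t • W₁)ᵀ = Q + t • W₁ := by
      rw [Matrix.transpose_add, Matrix.transpose_smul, hW₁sym, hQ]
    ext i j
    rw [Matrix.conjTranspose_apply, star_trivial]
    exact congrFun (congrFun hT i) j
  · intro x hx
    have hstar : star x = x := funext fun i => star_trivial _
    rw [hstar]
    have hexp : x ⬝ᵥ ((Q + t • W₁) *ᵥ x)
        = x ⬝ᵥ (Q *ᵥ x) + t * (x ⬝ᵥ (W₁ *ᵥ x)) := by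
      simp [Matrix.add_mulVec, dotProduct_add, Matrix.smul_mulVec, dotProduct_smul,
        smul_eq_mul]
    rw [hexp]
    have hQb := quad_bound Q x
    rw [← hC] at hQb
    have habs := (abs_le.mp hQb).1
    have hWb := hmin x
    have hxx : 0 < x ⬝ᵥ x := dot_self_pos hx
    have htc : t * c = C + 1 := div_mul_cancel₀ _ hc.ne'
    have h1 : t * (x ⬝ᵥ (W₁ *ᵥ x)) ≥ (C + 1) * (x ⬝ᵥ x) := by
      calc t * (x ⬝ᵥ (W₁ *ᵥ x)) ≥ t * (c * (x ⬝ᵥ x)) := by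
            exact mul_le_mul_of_nonneg_left hWb ht.le
        _ = (C + 1) * (x ⬝ᵥ x) := by rw [← mul_assoc, htc]
    nlinarith
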